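/- Let p ≥ 3 be an odd natural number, μ ≥ 0, α > 0, Δt > 0, and let x, y : ℕ → ℝ be sequences satisfying the difference scheme (x^{(n+1)} - x^{(n)})/Δt = (1/2)(y^{(n+1)} + y^{(n)}) and (y^{(n+1)} - y^{(n)})/Δt = -(α/(p+1)) Σ_{l=0}^{p} (x^{(n+1)})^{p-l} (x^{(n)})^{l} - (μ/2)(y^{(n+1)} + y^{(n)}) for all n. Define E^{(n)} := (1/2)(y^{(n)})² + (α/(p+1))(x^{(n)})^{p+1}. Then for every n ≥ 1, E^{(n)} + (μ/4) Σ_{l=0}^{n-1} (y^{(l+1)} + y^{(l)})² Δt = E^{(0)}. -/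
import Mathlib


/-- Discrete energy identity for the structure-preserving
difference scheme: for every `n ≥ 1`,
`E^(n) + (μ/4) Σ_{l=0}^{n-1} (y^(l+1) + y^(l))² Δt = E^(0)`, where
`E^(n) = (1/2)(y^(n))² + (α/(p+1))(x^(n))^(p+1)`. -/
theorem discrete_energy_identity
    (p : ℕ) (hp : 3 ≤ p) (hodd : Odd p)
    (μ α Δt : ℝ) (hμ : 0 ≤ μ) (hα : 0 < α) (hΔt : 0 < Δt)
    (x y : ℕ → ℝ)
    (hx : ∀ n : ℕ, (x (n + 1) - x n) / Δt = (1/2) * (y (n + 1) + y n))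
    (hy : ∀ n : ℕ, (y (n + 1) - y n) / Δt =
      -(α / ((p : ℝ) + 1)) * (∑ l ∈ Finset.range (p + 1),
        x (n + 1) ^ (p - l) * x n ^ l)
      - (μ/2) * (y (n + 1) + y n)) :
    ∀ n : ℕ, 1 ≤ n →
      ((1/2) * y n ^ 2 + (α / ((p : ℝ) + 1)) * x n ^ (p + 1))
        + (μ/4) * (∑ l ∈ Finset.range n, (y (l + 1) + y l) ^ 2) * Δt
      = (1/2) * y 0 ^ 2 + (α / ((p : ℝ) + 1)) * x 0 ^ (p + 1) := by
  have hΔt' : Δt ≠ 0 := ne_of_gt hΔt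
  have step : ∀ n : ℕ,
      ((1/2) * y (n+1) ^ 2 + (α / ((p : ℝ) + 1)) * x (n+1) ^ (p + 1))
        + (μ/4) * (y (n+1) + y n) ^ 2 * Δt
      = (1/2) * y n ^ 2 + (α / ((p : ℝ) + 1)) * x n ^ (p + 1) := by
    intro n
    set S : ℝ := ∑ l ∈ Finset.range (p + 1), x (n + 1) ^ (p - l) * x n ^ l with hS
    have hgeo : S * (x n - x (n+1)) = x n ^ (p+1) - x (n+1) ^ (p+1) := by
      have := geom_sum₂_mul (x n) (x (n+1)) (p+1)
      rw [hS]
      have hsum : (∑ l ∈ Finset.range (p + 1), x (n + 1) ^ (p - l) * x n ^ l)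
          = ∑ i ∈ Finset.range (p + 1), x n ^ i * x (n+1) ^ (p + 1 - 1 - i) := by
        apply Finset.sum_congr rfl
        intro i hi
        rw [mul_comm]
        norm_num
      rw [hsum, this]
    have hx' : x (n+1) - x n = Δt * ((1/2) * (y (n+1) + y n)) := by
      have := hx n
      field_simp at this
      linarith
    have hy' : y (n+1) - y n = Δt * (-(α / ((p : ℝ) + 1)) * S - (μ/2) * (y (n+1) + y n)) := by
      have := hy n
      rw [← hS] at this
      field_simp at this ⊢
      linarith
    have h1 : (α / ((p : ℝ) + 1)) * (x (n+1) ^ (p+1) - x n ^ (p+1))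
        = (α / ((p : ℝ) + 1)) * S * (Δt * ((1/2) * (y (n+1) + y n))) := by
      have : x (n+1) ^ (p+1) - x n ^ (p+1) = S * (x (n+1) - x n) := by
        nlinarith [hgeo]
      rw [this, hx']; ring
    have h2 : (1/2) * (y (n+1) ^ 2 - y n ^ 2)
        = (1/2) * (y (n+1) + y n) * (Δt * (-(α / ((p : ℝ) + 1)) * S - (μ/2) * (y (n+1) + y n))) := by
      rw [← hy']; ring
    nlinarith [h1, h2]
  intro n hn
  induction n with
  | zero => omega
  | succ m ih =>
    rcases Nat.eq_or_lt_of_le hn with h | h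
    · simp [← h, Finset.sum_range_one]
      have := step 0
      linarith
    · have hm : 1 ≤ m := by omega
      have ihm := ih hm
      rw [Finset.sum_range_succ]
      have := step m
      nlinarith [ihm, step m]
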